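/- Let C be a locally small category in which all morphisms are mono, and let A be an object of C. Then the Ramsey degree t_C(A) (for colorings of hom-sets) is finite if and only if both the Ramsey degree for objects t~_C(A) and the automorphism group Aut(A) are finite, and in that case t_C(A) = |Aut(A)| · t~_C(A). -/

import Mathlib

open CategoryTheory

universe v u v' u'

def RamseyArrow (C : Type u) [Category.{v} C] (A B Z : C) (k t : ℕ) : Prop :=
  ∀ χ : (A ⟶ Z) → Fin k, ∃ w : B ⟶ Z,
    (Set.range fun f : A ⟶ B => χ (f ≫ w)).ncard ≤ t

noncomputable def ramseyDeg (C : Type u) [Category.{v} C] (A : C) : ℕ∞ :=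
  sInf {n : ℕ∞ | ∃ m : ℕ, n = (m : ℕ∞) ∧ 1 ≤ m ∧
    ∀ k : ℕ, 2 ≤ k → ∀ B : C, ∃ Z : C, RamseyArrow C A B Z k m}

def objRel (C : Type u) [Category.{v} C] (A X : C) : (A ⟶ X) → (A ⟶ X) → Prop :=
  fun f f' => ∃ α : Aut A, f' = α.hom ≫ f

def ObjRamseyArrow (C : Type u) [Category.{v} C] (A B Z : C) (k t : ℕ) : Prop :=
  ∀ χ : Quot (objRel C A Z) → Fin k, ∃ w : B ⟶ Z,
    (Set.range fun f : A ⟶ B => χ (Quot.mk _ (f ≫ w))).ncard ≤ t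

noncomputable def objRamseyDeg (C : Type u) [Category.{v} C] (A : C) : ℕ∞ :=
  sInf {n : ℕ∞ | ∃ m : ℕ, n = (m : ℕ∞) ∧ 1 ≤ m ∧
    ∀ k : ℕ, 2 ≤ k → ∀ B : C, ∃ Z : C, ObjRamseyArrow C A B Z k m}

/-! ### Auxiliary lemmas -/

section Aux

variable {C : Type u} [Category.{v} C] {A : C}

lemma objRel_equiv (Z : C) : Equivalence (objRel C A Z) where
  refl f := ⟨Iso.refl A, by simp⟩
  symm := by
    rintro f f' ⟨(α : A ≅ A), rfl⟩
    exact ⟨α.symm, by simp⟩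
  trans := by
    rintro f g h ⟨(α : A ≅ A), rfl⟩ ⟨(β : A ≅ A), rfl⟩
    exact ⟨β ≪≫ α, by simp⟩

/-- A choice of representative for each `objRel`-class. -/
noncomputable def sec (Z : C) (q : Quot (objRel C A Z)) : A ⟶ Z :=
  (Quot.exists_rep q).choose

lemma sec_spec (Z : C) (q : Quot (objRel C A Z)) : Quot.mk _ (sec Z q) = q :=
  (Quot.exists_rep q).choose_spec

lemma exists_ind (Z : C) (g : A ⟶ Z) :
    ∃ α : Aut A, g = α.hom ≫ sec Z (Quot.mk _ g) := by
  have h : Quot.mk _ (sec Z (Quot.mk (objRel C A Z) g)) = Quot.mk (objRel C A Z) g :=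
    sec_spec Z _
  exact (objRel_equiv Z).eqvGen_iff.mp (Quot.eq.mp h)

/-- The unique automorphism relating `g` to the chosen representative of its class. -/
noncomputable def ind (Z : C) (g : A ⟶ Z) : Aut A := (exists_ind Z g).choose

lemma ind_spec (Z : C) (g : A ⟶ Z) :
    g = (ind Z g).hom ≫ sec Z (Quot.mk _ g) := (exists_ind Z g).choose_spec

variable (hmono : ∀ {X Y : C} (f : X ⟶ Y), Mono f)
include hmono

lemma ind_unique {Z : C} {g : A ⟶ Z} {α : Aut A}
    (h : g = α.hom ≫ sec Z (Quot.mk _ g)) : α = ind Z g := by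
  haveI := hmono (sec Z (Quot.mk (objRel C A Z) g))
  refine Iso.ext ?_
  rw [← cancel_mono (sec Z (Quot.mk (objRel C A Z) g)), ← h]
  exact ind_spec Z g

omit hmono in
lemma mk_comp {Z : C} (β : Aut A) (g : A ⟶ Z) :
    Quot.mk (objRel C A Z) (β.hom ≫ g) = Quot.mk _ g :=
  (Quot.sound ⟨β, rfl⟩).symm

lemma ind_comp {Z : C} (β : Aut A) (g : A ⟶ Z) :
    ind Z (β.hom ≫ g) = β ≪≫ ind Z g := by
  refine (ind_unique hmono ?_).symm
  rw [mk_comp]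
  calc β.hom ≫ g = β.hom ≫ (ind Z g).hom ≫ sec Z (Quot.mk _ g) := by
        rw [← ind_spec]
    _ = (β ≪≫ ind Z g).hom ≫ sec Z (Quot.mk _ g) := by
      exact (Category.assoc _ _ _).symm

lemma ind_surj {Z : C} (g : A ⟶ Z) (γ : Aut A) :
    ∃ β : Aut A, ind Z (β.hom ≫ g) = γ := by
  refine ⟨γ ≪≫ (ind Z g).symm, ?_⟩
  refine (ind_comp hmono (γ ≪≫ (ind Z g).symm) g).trans ?_
  exact Iso.ext (by
    change ((γ : A ≅ A).hom ≫ (ind Z g).inv) ≫ (ind Z g).hom = (γ : A ≅ A).hom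
    rw [Category.assoc, Iso.inv_hom_id (ind Z g : A ≅ A), Category.comp_id])

omit hmono in
lemma ncard_prod_univ {α β : Type*} (T : Set α) :
    (T ×ˢ (Set.univ : Set β)).ncard = T.ncard * Nat.card β := by
  rw [← Nat.card_coe_set_eq, Nat.card_congr (Equiv.Set.prod T Set.univ),
    Nat.card_prod, Nat.card_coe_set_eq, Nat.card_coe_set_eq, Set.ncard_univ]

/-- If the Ramsey degree is witnessed by some `m`, then `Aut A` is finite. -/
lemma finite_aut_of_ramsey
    (hm : ∃ m : ℕ, 1 ≤ m ∧ ∀ k : ℕ, 2 ≤ k → ∀ B : C, ∃ Z : C, RamseyArrow C A B Z k m) :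
    Finite (Aut A) := by
  classical
  by_contra hfin
  rw [not_finite_iff_infinite] at hfin
  obtain ⟨m, hm1, hm⟩ := hm
  obtain ⟨Z, hZ⟩ := hm (m + 1) (by omega) A
  let ι : Fin (m + 1) → Aut A := fun i => Infinite.natEmbedding (Aut A) i
  have hι : Function.Injective ι := fun i j h => by
    have := (Infinite.natEmbedding (Aut A)).injective h
    exact Fin.val_injective this
  let σ : Aut A → Fin (m + 1) := fun x => if h : ∃ i, ι i = x then h.choose else 0
  have hσ : ∀ i, σ (ι i) = i := by
    intro i
    have h : ∃ j, ι j = ι i := ⟨i, rfl⟩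
    simp only [σ, dif_pos h]
    exact hι h.choose_spec
  obtain ⟨w, hw⟩ := hZ (fun g => σ (ind Z g))
  have hw' : (Set.range fun f : A ⟶ A => σ (ind Z (f ≫ w))).ncard ≤ m := hw
  have hrange : (Set.range fun f : A ⟶ A => σ (ind Z (f ≫ w))) = Set.univ := by
    apply Set.eq_univ_of_forall
    intro j
    obtain ⟨β, hβ⟩ := ind_surj hmono w (ι j)
    exact ⟨β.hom, by show σ (ind Z (β.hom ≫ w)) = j; rw [hβ, hσ]⟩
  rw [hrange, Set.ncard_univ, Nat.card_eq_fintype_card, Fintype.card_fin] at hw'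
  omega

lemma card_aut_le [Finite (Aut A)] {m : ℕ}
    (hm : ∀ k : ℕ, 2 ≤ k → ∀ B : C, ∃ Z : C, RamseyArrow C A B Z k m) :
    Nat.card (Aut A) ≤ m := by
  classical
  haveI := Fintype.ofFinite (Aut A)
  set a := Nat.card (Aut A) with ha
  obtain ⟨Z, hZ⟩ := hm (a + 2) (by omega) A
  have hle : Fintype.card (Aut A) ≤ a + 2 := by
    rw [← Nat.card_eq_fintype_card]; omega
  let e : Aut A ↪ Fin (a + 2) :=
    (Fintype.equivFin (Aut A)).toEmbedding.trans (Fin.castLEEmb hle)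
  obtain ⟨w, hw⟩ := hZ (fun g => e (ind Z g))
  have hw' : (Set.range fun f : A ⟶ A => e (ind Z (f ≫ w))).ncard ≤ m := hw
  have hsub : Set.range (fun α : Aut A => e α) ⊆
      Set.range fun f : A ⟶ A => e (ind Z (f ≫ w)) := by
    rintro x ⟨α, rfl⟩
    obtain ⟨β, hβ⟩ := ind_surj hmono w α
    exact ⟨β.hom, by show e (ind Z (β.hom ≫ w)) = e α; rw [hβ]⟩
  have h1 := Set.ncard_le_ncard hsub (Set.toFinite _)
  rw [← Set.image_univ, Set.ncard_image_of_injective _ e.injective, Set.ncard_univ] at h1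
  exact le_trans h1 hw'

/-- From the Ramsey property with bound `m` one gets the object-Ramsey property with
bound `m / |Aut A|`. -/
lemma obj_of_ramsey [Finite (Aut A)] {m : ℕ}
    (hm : ∀ k : ℕ, 2 ≤ k → ∀ B : C, ∃ Z : C, RamseyArrow C A B Z k m)
    (k : ℕ) (hk : 2 ≤ k) (B : C) :
    ∃ Z : C, ObjRamseyArrow C A B Z k (m / Nat.card (Aut A)) := by
  classical
  haveI := Fintype.ofFinite (Aut A)
  set a := Nat.card (Aut A) with ha
  have ha0 : 0 < a := Nat.card_pos
  obtain ⟨Z, hZ⟩ := hm (k * a) (le_trans hk (Nat.le_mul_of_pos_right k ha0)) B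
  refine ⟨Z, fun χ => ?_⟩
  let E : Fin k × Aut A ≃ Fin (k * a) := Fintype.equivFinOfCardEq (by
    simp [ha, Nat.card_eq_fintype_card])
  obtain ⟨w, hw⟩ := hZ (fun g => E (χ (Quot.mk _ g), ind Z g))
  refine ⟨w, ?_⟩
  have hw' : (Set.range fun f : A ⟶ B =>
      E (χ (Quot.mk _ (f ≫ w)), ind Z (f ≫ w))).ncard ≤ m := hw
  have hsub : E '' ((Set.range fun f : A ⟶ B => χ (Quot.mk _ (f ≫ w))) ×ˢ Set.univ)
      ⊆ Set.range fun f : A ⟶ B => E (χ (Quot.mk _ (f ≫ w)), ind Z (f ≫ w)) := by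
    rintro x ⟨⟨c, α⟩, ⟨⟨f₀, hf₀⟩, -⟩, rfl⟩
    obtain ⟨β, hβ⟩ := ind_surj hmono (f₀ ≫ w) α
    refine ⟨β.hom ≫ f₀, ?_⟩
    simp only [Category.assoc]
    rw [mk_comp, hβ]
    simp only at hf₀
    rw [hf₀]
  have h1 := Set.ncard_le_ncard hsub (Set.toFinite _)
  rw [Set.ncard_image_of_injective _ E.injective, ncard_prod_univ] at h1
  exact (Nat.le_div_iff_mul_le ha0).mpr (le_trans h1 hw')

/-- From the object-Ramsey property with bound `m` one gets the Ramsey property with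
bound `|Aut A| * m`. -/
lemma ramsey_of_obj [Finite (Aut A)] {m : ℕ}
    (hm : ∀ k : ℕ, 2 ≤ k → ∀ B : C, ∃ Z : C, ObjRamseyArrow C A B Z k m)
    (k : ℕ) (hk : 2 ≤ k) (B : C) :
    ∃ Z : C, RamseyArrow C A B Z k (Nat.card (Aut A) * m) := by
  classical
  haveI := Fintype.ofFinite (Aut A)
  set a := Nat.card (Aut A) with ha
  have ha0 : 0 < a := Nat.card_pos
  have hk' : 2 ≤ k ^ a := le_trans hk (Nat.le_self_pow (by omega) k)
  obtain ⟨Z, hZ⟩ := hm (k ^ a) hk' B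
  refine ⟨Z, fun χ => ?_⟩
  let E : (Aut A → Fin k) ≃ Fin (k ^ a) := Fintype.equivFinOfCardEq (by
    simp [ha, Nat.card_eq_fintype_card])
  obtain ⟨w, hw⟩ := hZ (fun q => E (fun α => χ (α.hom ≫ sec Z q)))
  refine ⟨w, ?_⟩
  have hw' : (Set.range fun f : A ⟶ B =>
      E (fun α => χ (α.hom ≫ sec Z (Quot.mk _ (f ≫ w))))).ncard ≤ m := hw
  have hsub : (Set.range fun f : A ⟶ B => χ (f ≫ w)) ⊆
      (fun p : Fin (k ^ a) × Aut A => E.symm p.1 p.2) ''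
        ((Set.range fun f : A ⟶ B =>
          E (fun α => χ (α.hom ≫ sec Z (Quot.mk _ (f ≫ w))))) ×ˢ Set.univ) := by
    rintro x ⟨f, rfl⟩
    refine ⟨(E (fun α => χ (α.hom ≫ sec Z (Quot.mk _ (f ≫ w)))), ind Z (f ≫ w)),
      ⟨⟨f, rfl⟩, trivial⟩, ?_⟩
    simp only [Equiv.symm_apply_apply]
    exact (congrArg χ (ind_spec Z (f ≫ w))).symm
  calc (Set.range fun f : A ⟶ B => χ (f ≫ w)).ncard
      ≤ _ := Set.ncard_le_ncard hsub (Set.toFinite _)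
    _ ≤ ((Set.range fun f : A ⟶ B =>
          E (fun α => χ (α.hom ≫ sec Z (Quot.mk _ (f ≫ w))))) ×ˢ
            (Set.univ : Set (Aut A))).ncard := Set.ncard_image_le (Set.toFinite _)
    _ = (Set.range fun f : A ⟶ B =>
          E (fun α => χ (α.hom ≫ sec Z (Quot.mk _ (f ≫ w))))).ncard * a :=
        ncard_prod_univ _
    _ ≤ m * a := Nat.mul_le_mul_right a hw'
    _ = a * m := Nat.mul_comm m a

omit hmono in
lemma sInf_aux (p : ℕ → Prop) :
    (sInf {n : ℕ∞ | ∃ m : ℕ, n = (m : ℕ∞) ∧ p m} ≠ ⊤ ↔ ∃ m, p m) ∧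
    (∀ m : ℕ, p m → sInf {n : ℕ∞ | ∃ m : ℕ, n = (m : ℕ∞) ∧ p m} ≤ (m : ℕ∞)) ∧
    ((∃ m, p m) →
      ∃ m : ℕ, p m ∧ sInf {n : ℕ∞ | ∃ m : ℕ, n = (m : ℕ∞) ∧ p m} = (m : ℕ∞)) := by
  set S := {n : ℕ∞ | ∃ m : ℕ, n = (m : ℕ∞) ∧ p m} with hS
  have hle : ∀ m : ℕ, p m → sInf S ≤ (m : ℕ∞) := fun m hp => sInf_le ⟨m, rfl, hp⟩
  refine ⟨⟨fun h => ?_, fun ⟨m, hp⟩ h => ?_⟩, hle, fun ⟨m, hp⟩ => ?_⟩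
  · by_contra hne
    push_neg at hne
    have : S = ∅ := by
      ext n
      simp only [Set.mem_empty_iff_false, iff_false, hS, Set.mem_setOf_eq]
      rintro ⟨m, rfl, hp⟩
      exact hne m hp
    rw [this, sInf_empty] at h
    exact h rfl
  · have := hle m hp
    rw [h] at this
    exact (ENat.coe_lt_top m).not_ge this
  · have hne : S.Nonempty := ⟨m, m, rfl, hp⟩
    obtain ⟨m', hm', hp'⟩ := csInf_mem hne
    exact ⟨m', hp', hm'⟩

end Aux

theorem stmt0 {C : Type u} [Category.{v} C]
    (hmono : ∀ {X Y : C} (f : X ⟶ Y), Mono f) (A : C) :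
    (ramseyDeg C A ≠ ⊤ ↔ objRamseyDeg C A ≠ ⊤ ∧ Finite (Aut A)) ∧
    (ramseyDeg C A ≠ ⊤ →
      ramseyDeg C A = (Nat.card (Aut A) : ℕ∞) * objRamseyDeg C A) := by
  set pr : ℕ → Prop := fun m => 1 ≤ m ∧
    ∀ k : ℕ, 2 ≤ k → ∀ B : C, ∃ Z : C, RamseyArrow C A B Z k m with hpr
  set po : ℕ → Prop := fun m => 1 ≤ m ∧
    ∀ k : ℕ, 2 ≤ k → ∀ B : C, ∃ Z : C, ObjRamseyArrow C A B Z k m with hpo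
  obtain ⟨hr1, hr2, hr3⟩ := sInf_aux pr
  obtain ⟨ho1, ho2, ho3⟩ := sInf_aux po
  have hrdef : ramseyDeg C A = sInf {n : ℕ∞ | ∃ m : ℕ, n = (m : ℕ∞) ∧ pr m} := rfl
  have hodef : objRamseyDeg C A = sInf {n : ℕ∞ | ∃ m : ℕ, n = (m : ℕ∞) ∧ po m} := rfl
  -- Main forward analysis
  have main : ramseyDeg C A ≠ ⊤ →
      (objRamseyDeg C A ≠ ⊤ ∧ Finite (Aut A)) ∧
      ramseyDeg C A = (Nat.card (Aut A) : ℕ∞) * objRamseyDeg C A := by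
    intro h
    rw [hrdef] at h
    obtain ⟨m, ⟨hm1, hm⟩, hmeq⟩ := hr3 (hr1.mp h)
    haveI hfin : Finite (Aut A) := finite_aut_of_ramsey hmono ⟨m, hm1, hm⟩
    set a := Nat.card (Aut A) with ha
    have ha0 : 0 < a := Nat.card_pos
    have hamle : a ≤ m := card_aut_le hmono hm
    have hobj : po (m / a) := by
      refine ⟨(Nat.one_le_div_iff ha0).mpr hamle, ?_⟩
      exact obj_of_ramsey hmono hm
    have honetop : objRamseyDeg C A ≠ ⊤ := by
      rw [hodef]; exact ho1.mpr ⟨m / a, hobj⟩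
    refine ⟨⟨honetop, hfin⟩, ?_⟩
    obtain ⟨t, ⟨ht1, ht⟩, hteq⟩ := ho3 (ho1.mp (hodef ▸ honetop))
    have h1 : m ≤ a * t := by
      have := hr2 (a * t) ⟨Nat.mul_pos ha0 ht1, ramsey_of_obj hmono ht⟩
      rw [hmeq] at this
      exact_mod_cast this
    have h2 : t ≤ m / a := by
      have := ho2 (m / a) hobj
      rw [hteq] at this
      exact_mod_cast this
    have h3 : m = a * t := by
      have : a * t ≤ a * (m / a) := Nat.mul_le_mul_left a h2
      have h4 : a * (m / a) ≤ m := Nat.mul_div_le m a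
      omega
    rw [hrdef, hmeq, hodef, hteq, h3]
    push_cast
    ring
  constructor
  · constructor
    · exact fun h => (main h).1
    · rintro ⟨ho, hfin⟩
      rw [hodef] at ho
      obtain ⟨t, ⟨ht1, ht⟩, -⟩ := ho3 (ho1.mp ho)
      have ha0 : 0 < Nat.card (Aut A) := Nat.card_pos
      have : pr (Nat.card (Aut A) * t) := ⟨Nat.mul_pos ha0 ht1, ramsey_of_obj hmono ht⟩
      rw [hrdef]
      exact hr1.mpr ⟨_, this⟩
  · exact fun h => (main h).2
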